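/- Let κ be an infinite cardinal and let G be a group of cardinality κ such that every group of cardinality κ embeds into G. Then G does not embed into any co-Hopfian group of cardinality κ. -/

import Mathlib

open Cardinal

/-- Let `κ` be an infinite cardinal and `G` a group of cardinality `κ` containing a copy
of every group of cardinality `κ`. Then `G` does not embed into any co-Hopfian group of
cardinality `κ`. -/
theorem universal_not_embed_coHopfian (κ : Cardinal.{u}) (hκ : ℵ₀ ≤ κ)
    (G : Type u) [Group G] (hG : #G = κ)
    (huniv : ∀ (K : Type u) [Group K], #K = κ → ∃ f : K →* G, Function.Injective f)
    (H : Type u) [Group H] (hH : #H = κ)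
    (hcoHopf : ∀ β : H →* H, Function.Injective β → Function.Surjective β) :
    ¬ ∃ f : G →* H, Function.Injective f := by
  rintro ⟨f, hf⟩
  set K := H × ULift.{u} (Multiplicative ℤ) with hKdef
  have hKcard : #K = κ := by
    have : #K = κ * ℵ₀ := by
      simp [hKdef, Cardinal.mk_prod, hH, Cardinal.mk_uLift]
    rw [this, Cardinal.mul_eq_left hκ hκ Cardinal.aleph0_ne_zero]
  obtain ⟨g, hg⟩ := huniv K hKcard
  -- β : H → H, injective endomorphism
  let β : H →* H := (f.comp g).comp (MonoidHom.inl H (ULift.{u} (Multiplicative ℤ)))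
  have hβinj : Function.Injective β :=
    (hf.comp hg).comp (fun a b h => by exact congrArg Prod.fst h)
  have hβsurj := hcoHopf β hβinj
  obtain ⟨h, hh⟩ := hβsurj (f (g (1, ULift.up (Multiplicative.ofAdd 1))))
  have : ((h, (1 : ULift.{u} (Multiplicative ℤ))) : K)
      = (1, ULift.up (Multiplicative.ofAdd 1)) := hf.comp hg hh
  have := congrArg (fun p : K => (p.2.down : Multiplicative ℤ)) this
  simp at this
  exact absurd this (by decide)
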